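/- arXiv:1502.06693 — 2 statements merged into one kernel-verified Lean document; each statement's English description precedes it below -/
import Mathlib

section
/- For any index 𝐤 = (k_1,…,k_r) with r ≥ 1, the evaluation of the finite multiple polylogarithm at T = 1 vanishes: li_𝐤(1) = 0 in 𝒜; that is, for all sufficiently large primes p, Σ′_{0<l_1,…,l_r<p} 1/(l_1^{k_1}(l_1+l_2)^{k_2}⋯(l_1+⋯+l_r)^{k_r}) ≡ 0 (mod p), where Σ′ restricts to terms whose denominators are prime to p. -/
open scoped BigOperators

set_option synthInstance.maxHeartbeats 400000

namespace FMP

/-- The type of prime numbers. -/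
abbrev PP := Nat.Primes

instance (p : PP) : Fact (Nat.Prime (p : ℕ)) := ⟨p.2⟩

/-- The ideal of families vanishing at all but finitely many primes. -/
def cofinIdeal (R : PP → Type) [∀ p, CommRing (R p)] : Ideal (∀ p, R p) where
  carrier := {f | ∀ᶠ p in Filter.cofinite, f p = 0}
  add_mem' := by
    intro f g hf hg
    show ∀ᶠ p in Filter.cofinite, (f + g) p = 0
    simp only [Set.mem_setOf_eq] at hf hg
    filter_upwards [hf, hg] with p h1 h2
    simp [h1, h2]
  zero_mem' := by
    show ∀ᶠ p in Filter.cofinite, (0 : ∀ p, R p) p = 0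
    exact Filter.Eventually.of_forall fun p => rfl
  smul_mem' := by
    intro c f hf
    show ∀ᶠ p in Filter.cofinite, (c • f) p = 0
    simp only [Set.mem_setOf_eq] at hf
    filter_upwards [hf] with p h
    simp [h]

lemma mem_cofinIdeal {R : PP → Type} [∀ p, CommRing (R p)] (f : ∀ p, R p) :
    f ∈ cofinIdeal R ↔ ∀ᶠ p in Filter.cofinite, f p = 0 := Iff.rfl

/-- The ring 𝒜 = (∏ₚ 𝔽ₚ)/(⊕ₚ 𝔽ₚ). -/
abbrev A : Type := (∀ p : PP, ZMod p) ⧸ cofinIdeal fun p => ZMod p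

/-- The ring ℬ = (∏ₚ 𝔽ₚ[T])/(⊕ₚ 𝔽ₚ[T]). -/
abbrev B : Type := (∀ p : PP, Polynomial (ZMod p)) ⧸ cofinIdeal fun p => Polynomial (ZMod p)

noncomputable def Amk : (∀ p : PP, ZMod p) →+* A := Ideal.Quotient.mk _
noncomputable def Bmk : (∀ p : PP, Polynomial (ZMod p)) →+* B := Ideal.Quotient.mk _

/-- The componentwise action of 𝒜 on ℬ, as a ring homomorphism 𝒜 →+* ℬ. -/
noncomputable def AtoB : A →+* B :=
  Ideal.Quotient.lift _
    (Bmk.comp (Pi.ringHom fun p => Polynomial.C.comp (Pi.evalRingHom (fun q : PP => ZMod (q : ℕ)) p)))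
    (fun f hf => by
      rw [RingHom.comp_apply]
      rw [show Bmk = Ideal.Quotient.mk (cofinIdeal fun p => Polynomial (ZMod p)) from rfl]
      rw [Ideal.Quotient.eq_zero_iff_mem, mem_cofinIdeal]
      rw [mem_cofinIdeal] at hf
      filter_upwards [hf] with p h
      exact (congrArg Polynomial.C h).trans (map_zero _))

/-- Partial sums: `psum l i = l 0 + ... + l i`. -/
def psum {r : ℕ} (l : Fin r → ℕ) (i : Fin r) : ℕ := ∑ j ∈ Finset.Iic i, l j

/-- The finset of tuples `(l 0, ..., l (r-1))` with `0 < l i < p`. -/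
def pf (r p : ℕ) : Finset (Fin r → ℕ) := Fintype.piFinset fun _ => Finset.Ioo 0 p

/-- The denominator `L_1^{k_1} ⋯ L_r^{k_r}` of a term, as an element of 𝔽ₚ.
(Its inverse is `0` whenever some partial sum is divisible by `p`, so taking inverses
of these denominators automatically implements the restricted sums `Σ'`.) -/
def den (p : PP) (k : List ℕ) (l : Fin k.length → ℕ) : ZMod (p : ℕ) :=
  ∏ i, ((psum l i : ℕ) : ZMod (p : ℕ)) ^ k.get i

/-- The weight of an index. -/
def wt (k : List ℕ) : ℕ := k.sum

/-- The finite multiple zeta value ζ_𝒜(k). -/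
noncomputable def zetaA (k : List ℕ) : A :=
  Amk fun p => ∑ l ∈ (pf k.length (p : ℕ)).filter (fun l => ∑ i, l i < (p : ℕ)), (den p k l)⁻¹

/-- The variant ζ^{(i)}_𝒜(k) of finite multiple zeta values. -/
noncomputable def zetaAi (i : ℕ) (k : List ℕ) : A :=
  Amk fun p => ∑ l ∈ (pf k.length (p : ℕ)).filter
      (fun l => (i - 1) * (p : ℕ) < ∑ j, l j ∧ ∑ j, l j < i * (p : ℕ)), (den p k l)⁻¹

/-- The finite multiple polylogarithm li_k(T) ∈ ℬ. -/
noncomputable def liT (k : List ℕ) : B :=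
  Bmk fun p => ∑ l ∈ pf k.length (p : ℕ),
    Polynomial.C ((den p k l)⁻¹) * Polynomial.X ^ (∑ i, l i)

/-- The element T^p of ℬ. -/
noncomputable def Tp : B := Bmk fun p => Polynomial.X ^ (p : ℕ)

/-- The finite multiple polylogarithm li(λ, μ, ν; T) of type (λ, μ, ν). -/
noncomputable def liType (lam mu nu : List ℕ) : B :=
  Bmk fun p =>
    ∑ l ∈ pf lam.length (p : ℕ), ∑ m ∈ pf mu.length (p : ℕ), ∑ n ∈ pf nu.length (p : ℕ),
      Polynomial.C ((den p lam l * den p mu m *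
          ∏ z, ((((∑ i, l i) + (∑ j, m j) + psum n z : ℕ)) : ZMod (p : ℕ)) ^ nu.get z)⁻¹) *
        Polynomial.X ^ ((∑ i, l i) + (∑ j, m j) + (∑ z, n z))



section Aux

variable {p : ℕ} [hp' : Fact p.Prime]

/-- Sum over `x ∈ (0,p)` of `f (x : ZMod p)` equals sum over nonzero residues. -/
lemma sum_Ioo_cast {M : Type*} [AddCommMonoid M] (f : ZMod p → M) :
    ∑ x ∈ Finset.Ioo 0 p, f ((x : ℕ) : ZMod p) = ∑ a ∈ Finset.univ.erase (0 : ZMod p), f a := by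
  haveI : NeZero p := ⟨hp'.out.ne_zero⟩
  refine Finset.sum_nbij' (fun x => ((x : ℕ) : ZMod p)) (fun a => a.val) ?_ ?_ ?_ ?_ ?_
  · intro x hx
    rw [Finset.mem_Ioo] at hx
    rw [Finset.mem_erase]
    refine ⟨?_, Finset.mem_univ _⟩
    intro h
    rw [ZMod.natCast_eq_zero_iff] at h
    exact absurd (Nat.le_of_dvd hx.1 h) (not_le.2 hx.2)
  · intro a ha
    rw [Finset.mem_erase] at ha
    rw [Finset.mem_Ioo]
    exact ⟨Nat.pos_of_ne_zero (fun h => ha.1 ((ZMod.val_eq_zero a).1 h)), ZMod.val_lt a⟩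
  · intro x hx
    rw [Finset.mem_Ioo] at hx
    exact ZMod.val_cast_of_lt hx.2
  · intro a _
    exact ZMod.natCast_rightInverse a
  · intro x _
    rfl

/-- The key auxiliary recursive sum. -/
def Hfun (p : ℕ) : List ℕ → ZMod p → ZMod p
  | [], _ => 1
  | k₀ :: k', b => ∑ x ∈ Finset.Ioo 0 p,
      ((b + ((x : ℕ) : ZMod p))⁻¹) ^ k₀ * Hfun p k' (b + ((x : ℕ) : ZMod p))

lemma psum_eq {r : ℕ} (l : Fin r → ℕ) (i : Fin r) :
    psum l i = ∑ j, if j ≤ i then l j else 0 := by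
  rw [psum, ← Finset.univ_inter (Finset.Iic i), ← Finset.sum_ite_mem]
  simp [Finset.mem_Iic]

lemma psum_cons_zero {n : ℕ} (x : ℕ) (l : Fin n → ℕ) : psum (Fin.cons x l) 0 = x := by
  simp [psum_eq, Fin.sum_univ_succ, Fin.le_zero_iff, Fin.succ_ne_zero]

lemma psum_cons_succ {n : ℕ} (x : ℕ) (l : Fin n → ℕ) (i : Fin n) :
    psum (Fin.cons x l) i.succ = x + psum l i := by
  rw [psum_eq, psum_eq, Fin.sum_univ_succ]
  simp [Fin.succ_le_succ_iff, Fin.zero_le]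

lemma sum_pf_succ {M : Type*} [AddCommMonoid M] (n q : ℕ) (F : (Fin (n + 1) → ℕ) → M) :
    ∑ l ∈ pf (n + 1) q, F l = ∑ x ∈ Finset.Ioo 0 q, ∑ l ∈ pf n q, F (Fin.cons x l) := by
  rw [← Finset.sum_product']
  refine Finset.sum_nbij' (fun l => (l 0, Fin.tail l)) (fun q => Fin.cons q.1 q.2) ?_ ?_ ?_ ?_ ?_
  · intro l hl
    rw [pf, Fintype.mem_piFinset] at hl
    rw [Finset.mem_product]
    exact ⟨hl 0, by rw [pf, Fintype.mem_piFinset]; intro i; exact hl i.succ⟩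
  · intro q hq
    rw [Finset.mem_product] at hq
    rw [pf, Fintype.mem_piFinset]
    intro i
    refine Fin.cases ?_ ?_ i
    · simpa using hq.1
    · intro j
      have := hq.2
      rw [pf, Fintype.mem_piFinset] at this
      simpa using this j
  · intro l _
    exact Fin.cons_self_tail l
  · intro q _
    simp [Fin.tail_cons]
  · intro l _
    rw [Fin.cons_self_tail]

lemma sum_eq_H (k : List ℕ) (b : ZMod p) :
    ∑ l ∈ pf k.length p, ∏ i, ((b + ((psum l i : ℕ) : ZMod p))⁻¹) ^ k.get i = Hfun p k b := by
  induction k generalizing b with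
  | nil =>
    simp [Hfun, pf, Finset.univ_eq_empty]
  | cons k₀ k' ih =>
    show (∑ l ∈ pf (k'.length + 1) p,
        ∏ i : Fin (k'.length + 1), ((b + ((psum l i : ℕ) : ZMod p))⁻¹) ^ (k₀ :: k').get i) = _
    rw [sum_pf_succ]
    rw [show Hfun p (k₀ :: k') b = ∑ x ∈ Finset.Ioo 0 p,
        ((b + ((x : ℕ) : ZMod p))⁻¹) ^ k₀ * Hfun p k' (b + ((x : ℕ) : ZMod p)) from rfl]
    refine Finset.sum_congr rfl fun x _ => ?_
    rw [← ih (b + (x : ZMod p)), Finset.mul_sum]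
    refine Finset.sum_congr rfl fun l _ => ?_
    rw [Fin.prod_univ_succ]
    congr 1
    · refine Finset.prod_congr rfl fun i _ => ?_
      rw [psum_cons_succ]
      push_cast
      rw [add_assoc]
      rfl

lemma H_poly (k : List ℕ) :
    ∃ Q : Polynomial (ZMod p), Q.natDegree ≤ wt k ∧ ∀ b, Hfun p k b = Q.eval b⁻¹ := by
  induction k with
  | nil => exact ⟨1, by simp [Hfun, wt]⟩
  | cons k₀ k' ih =>
    obtain ⟨Q', hd, hQ⟩ := ih
    refine ⟨Polynomial.C (∑ c : ZMod p, (c⁻¹) ^ k₀ * Q'.eval c⁻¹) - Polynomial.X ^ k₀ * Q',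
      ?_, ?_⟩
    · refine le_trans (Polynomial.natDegree_sub_le _ _) ?_
      rw [Polynomial.natDegree_C]
      refine max_le (Nat.zero_le _) ?_
      refine le_trans (Polynomial.natDegree_mul_le) ?_
      rw [Polynomial.natDegree_X_pow, wt, List.sum_cons]
      exact Nat.add_le_add_left hd _
    · intro b
      show (∑ x ∈ Finset.Ioo 0 p,
          ((b + ((x : ℕ) : ZMod p))⁻¹) ^ k₀ * Hfun p k' (b + ((x : ℕ) : ZMod p))) = _
      rw [sum_Ioo_cast (fun a => ((b + a)⁻¹) ^ k₀ * Hfun p k' (b + a))]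
      have h1 : ∑ a ∈ Finset.univ.erase (0 : ZMod p),
          ((b + a)⁻¹) ^ k₀ * Hfun p k' (b + a)
          = (∑ a : ZMod p, ((b + a)⁻¹) ^ k₀ * Hfun p k' (b + a))
            - ((b + 0)⁻¹) ^ k₀ * Hfun p k' (b + 0) := by
        rw [eq_sub_iff_add_eq, Finset.sum_erase_add _ _ (Finset.mem_univ 0)]
      rw [h1]
      have h2 : (∑ a : ZMod p, ((b + a)⁻¹) ^ k₀ * Hfun p k' (b + a))
          = ∑ c : ZMod p, (c⁻¹) ^ k₀ * Hfun p k' c :=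
        Equiv.sum_comp (Equiv.addLeft b) (fun c => (c⁻¹) ^ k₀ * Hfun p k' c)
      rw [h2, add_zero, Polynomial.eval_sub, Polynomial.eval_C, Polynomial.eval_mul,
        Polynomial.eval_pow, Polynomial.eval_X, hQ b]
      congr 1
      exact Finset.sum_congr rfl fun c _ => by rw [hQ c]

lemma sum_eval_eq_zero (Q : Polynomial (ZMod p)) (h : Q.natDegree < p - 1) :
    ∑ x : ZMod p, Q.eval x = 0 := by
  have he : ∀ x : ZMod p, Q.eval x = ∑ i ∈ Finset.range (Q.natDegree + 1), Q.coeff i * x ^ i :=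
    fun x => Q.eval_eq_sum_range x
  rw [Finset.sum_congr rfl (fun x _ => he x), Finset.sum_comm]
  refine Finset.sum_eq_zero fun i hi => ?_
  rw [← Finset.mul_sum]
  have hz : ∑ x : ZMod p, x ^ i = 0 := by
    refine FiniteField.sum_pow_lt_card_sub_one (ZMod p) i ?_
    rw [ZMod.card]
    rw [Finset.mem_range] at hi
    omega
  rw [hz, mul_zero]

/-- For `p` large, the restricted multiple harmonic sum vanishes. -/
lemma key (k : List ℕ) (hk : ∀ i ∈ k, 0 < i) (hr : 0 < k.length) (hbig : wt k + 2 ≤ p) :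
    ∑ l ∈ pf k.length p, (∏ i, (((psum l i : ℕ) : ZMod p) ^ k.get i))⁻¹ = 0 := by
  have hden : ∀ l : Fin k.length → ℕ,
      (∏ i, (((psum l i : ℕ) : ZMod p) ^ k.get i))⁻¹
        = ∏ i, (((0 : ZMod p) + ((psum l i : ℕ) : ZMod p))⁻¹) ^ k.get i := by
    intro l
    rw [← Finset.prod_inv_distrib]
    exact Finset.prod_congr rfl fun i _ => by rw [zero_add, inv_pow]
  rw [Finset.sum_congr rfl fun l _ => hden l, sum_eq_H k (0 : ZMod p)]
  obtain ⟨k₀, k', rfl⟩ : ∃ k₀ k', k = k₀ :: k' := by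
    cases k with
    | nil => exact absurd hr (by simp)
    | cons a l => exact ⟨a, l, rfl⟩
  obtain ⟨Q', hd, hQ⟩ := H_poly (p := p) k'
  have hk₀ : 0 < k₀ := hk k₀ List.mem_cons_self
  show (∑ x ∈ Finset.Ioo 0 p,
      (((0 : ZMod p) + ((x : ℕ) : ZMod p))⁻¹) ^ k₀
        * Hfun p k' ((0 : ZMod p) + ((x : ℕ) : ZMod p))) = 0
  rw [sum_Ioo_cast (fun a => (((0 : ZMod p) + a)⁻¹) ^ k₀ * Hfun p k' ((0 : ZMod p) + a))]
  simp only [zero_add]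
  have hterm : ∀ a : ZMod p, a⁻¹ ^ k₀ * Hfun p k' a = (Polynomial.X ^ k₀ * Q').eval a⁻¹ := by
    intro a
    rw [hQ a, Polynomial.eval_mul, Polynomial.eval_pow, Polynomial.eval_X]
  rw [Finset.sum_congr rfl fun a _ => hterm a]
  have h1 : ∑ a ∈ Finset.univ.erase (0 : ZMod p), (Polynomial.X ^ k₀ * Q').eval a⁻¹
      = ∑ a : ZMod p, (Polynomial.X ^ k₀ * Q').eval a⁻¹ := by
    rw [← Finset.sum_erase_add _ _ (Finset.mem_univ (0 : ZMod p))]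
    have hz : (Polynomial.X ^ k₀ * Q').eval ((0 : ZMod p))⁻¹ = 0 := by
      rw [inv_zero, Polynomial.eval_mul, Polynomial.eval_pow, Polynomial.eval_X,
        zero_pow hk₀.ne', zero_mul]
    rw [hz, add_zero]
  rw [h1]
  have h3 : ∑ a : ZMod p, (Polynomial.X ^ k₀ * Q').eval a⁻¹
      = ∑ x : ZMod p, (Polynomial.X ^ k₀ * Q').eval x :=
    Fintype.sum_bijective (fun a : ZMod p => a⁻¹) inv_involutive.bijective _ _ (fun a => rfl)
  rw [h3]
  refine sum_eval_eq_zero _ ?_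
  refine lt_of_le_of_lt (Polynomial.natDegree_mul_le) ?_
  rw [Polynomial.natDegree_X_pow]
  have : wt (k₀ :: k') = k₀ + wt k' := by simp [wt]
  omega

end Aux

/-- li_𝐤(1) = 0 in 𝒜: for all but finitely many primes p, the restricted sum
Σ'_{0<l_1,…,l_r<p} 1/(l_1^{k_1}(l_1+l_2)^{k_2}⋯(l_1+⋯+l_r)^{k_r}) vanishes mod p.
(The inverse of `den` is 0 whenever a partial sum is divisible by p, which implements Σ'.) -/
theorem li_at_one_eq_zero (k : List ℕ) (hk : ∀ i ∈ k, 0 < i) (hr : 0 < k.length) :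
    Amk (fun p => ∑ l ∈ pf k.length (p : ℕ), (den p k l)⁻¹) = 0 := by
  rw [show Amk = Ideal.Quotient.mk (cofinIdeal fun p : PP => ZMod (p : ℕ)) from rfl,
    Ideal.Quotient.eq_zero_iff_mem, mem_cofinIdeal, Filter.eventually_cofinite]
  have hfin : {q : PP | (q : ℕ) < wt k + 2}.Finite := by
    have himg : ((fun q : PP => (q : ℕ)) '' {q : PP | (q : ℕ) < wt k + 2}).Finite := by
      refine Set.Finite.subset (Set.finite_Iio (wt k + 2)) ?_
      rintro n ⟨q, hq, rfl⟩
      exact hq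
    exact Set.Finite.of_finite_image himg (fun a _ b _ h => Subtype.coe_injective h)
  refine Set.Finite.subset hfin ?_
  intro q hq
  simp only [Set.mem_setOf_eq] at hq ⊢
  by_contra hlt
  push_neg at hlt
  refine hq ?_
  have : ∀ l, (den q k l)⁻¹ = (∏ i, (((psum l i : ℕ) : ZMod (q : ℕ)) ^ k.get i))⁻¹ :=
    fun l => rfl
  rw [Finset.sum_congr rfl fun l _ => this l]
  exact key k hk hr hlt

end FMP
end

section
/- For all positive integers k_1, k_2, k_3: ζ^{(2)}_𝒜(k_1, k_2, k_3) = ζ_𝒜(k_3, k_1, k_2) + ζ_𝒜(k_1, k_3, k_2) + ζ_𝒜(k_2, k_3, k_1) + ζ_𝒜(k_2, k_1, k_3) + ζ_𝒜(k_1+k_3, k_2) + ζ_𝒜(k_2, k_1+k_3) in 𝒜. -/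
open scoped BigOperators

set_option synthInstance.maxHeartbeats 400000

namespace FMP

/-! ### Auxiliary lemmas -/


lemma den3 (p : PP) (a b c : ℕ) (l : Fin 3 → ℕ) :
    den p [a,b,c] l = ((l 0 : ℕ) : ZMod (p:ℕ))^a * (((l 0 + l 1 : ℕ)) : ZMod (p:ℕ))^b
      * (((l 0 + l 1 + l 2 : ℕ)) : ZMod (p:ℕ))^c := by
  have h0 : psum l 0 = l 0 := by
    simp [psum, show Finset.Iic (0:Fin 3) = {0} from by decide]
  have h1 : psum l 1 = l 0 + l 1 := by
    simp [psum, show Finset.Iic (1:Fin 3) = {0,1} from by decide]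
  have h2 : psum l 2 = l 0 + l 1 + l 2 := by
    simp [psum, show Finset.Iic (2:Fin 3) = {0,1,2} from by decide, add_assoc]
  show ∏ i : Fin 3, _ = _
  rw [Fin.prod_univ_three, h0, h1, h2]
  norm_num [add_assoc]

lemma den2 (p : PP) (a b : ℕ) (l : Fin 2 → ℕ) :
    den p [a,b] l = ((l 0 : ℕ) : ZMod (p:ℕ))^a * (((l 0 + l 1 : ℕ)) : ZMod (p:ℕ))^b := by
  have h0 : psum l 0 = l 0 := by
    simp [psum, show Finset.Iic (0:Fin 2) = {0} from by decide]
  have h1 : psum l 1 = l 0 + l 1 := by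
    simp [psum, show Finset.Iic (1:Fin 2) = {0,1} from by decide]
  show ∏ i : Fin 2, _ = _
  rw [Fin.prod_univ_two, h0, h1]
  rfl

lemma mem_pf3 {q : ℕ} {l : Fin 3 → ℕ} : l ∈ pf 3 q ↔
    (0 < l 0 ∧ l 0 < q) ∧ (0 < l 1 ∧ l 1 < q) ∧ (0 < l 2 ∧ l 2 < q) := by
  simp only [pf, Fintype.mem_piFinset, Finset.mem_Ioo]
  exact ⟨fun h => ⟨h 0, h 1, h 2⟩, fun h i => by fin_cases i <;> tauto⟩

lemma mem_pf2 {q : ℕ} {l : Fin 2 → ℕ} : l ∈ pf 2 q ↔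
    (0 < l 0 ∧ l 0 < q) ∧ (0 < l 1 ∧ l 1 < q) := by
  simp only [pf, Fintype.mem_piFinset, Finset.mem_Ioo]
  exact ⟨fun h => ⟨h 0, h 1⟩, fun h i => by fin_cases i <;> tauto⟩

lemma cast_q_add (p : PP) (x : ℕ) : ((((p:ℕ) + x : ℕ)) : ZMod (p:ℕ)) = (x : ZMod (p:ℕ)) := by
  push_cast
  simp


set_option maxHeartbeats 1000000 in
lemma key_lemma (k1 k2 k3 : ℕ) (h2 : 0 < k2) (p : PP) :
    (∑ l ∈ (pf (List.length [k1,k2,k3]) (p:ℕ)).filter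
        (fun l => (2 - 1) * (p:ℕ) < ∑ j, l j ∧ ∑ j, l j < 2 * (p:ℕ)), (den p [k1,k2,k3] l)⁻¹)
      = (∑ l ∈ (pf (List.length [k3,k1,k2]) (p:ℕ)).filter (fun l => ∑ i, l i < (p:ℕ)), (den p [k3,k1,k2] l)⁻¹)
        + (∑ l ∈ (pf (List.length [k1,k3,k2]) (p:ℕ)).filter (fun l => ∑ i, l i < (p:ℕ)), (den p [k1,k3,k2] l)⁻¹)
        + (∑ l ∈ (pf (List.length [k2,k3,k1]) (p:ℕ)).filter (fun l => ∑ i, l i < (p:ℕ)), (den p [k2,k3,k1] l)⁻¹)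
        + (∑ l ∈ (pf (List.length [k2,k1,k3]) (p:ℕ)).filter (fun l => ∑ i, l i < (p:ℕ)), (den p [k2,k1,k3] l)⁻¹)
        + (∑ l ∈ (pf (List.length [k1+k3,k2]) (p:ℕ)).filter (fun l => ∑ i, l i < (p:ℕ)), (den p [k1+k3,k2] l)⁻¹)
        + (∑ l ∈ (pf (List.length [k2,k1+k3]) (p:ℕ)).filter (fun l => ∑ i, l i < (p:ℕ)), (den p [k2,k1+k3] l)⁻¹) := by
  show (∑ l ∈ (pf 3 (p:ℕ)).filter
        (fun l => (2 - 1) * (p:ℕ) < ∑ j, l j ∧ ∑ j, l j < 2 * (p:ℕ)), (den p [k1,k2,k3] l)⁻¹)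
      = (∑ l ∈ (pf 3 (p:ℕ)).filter (fun l => ∑ i, l i < (p:ℕ)), (den p [k3,k1,k2] l)⁻¹)
        + (∑ l ∈ (pf 3 (p:ℕ)).filter (fun l => ∑ i, l i < (p:ℕ)), (den p [k1,k3,k2] l)⁻¹)
        + (∑ l ∈ (pf 3 (p:ℕ)).filter (fun l => ∑ i, l i < (p:ℕ)), (den p [k2,k3,k1] l)⁻¹)
        + (∑ l ∈ (pf 3 (p:ℕ)).filter (fun l => ∑ i, l i < (p:ℕ)), (den p [k2,k1,k3] l)⁻¹)
        + (∑ l ∈ (pf 2 (p:ℕ)).filter (fun l => ∑ i, l i < (p:ℕ)), (den p [k1+k3,k2] l)⁻¹)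
        + (∑ l ∈ (pf 2 (p:ℕ)).filter (fun l => ∑ i, l i < (p:ℕ)), (den p [k2,k1+k3] l)⁻¹)
  simp only [Fin.sum_univ_three, Fin.sum_univ_two, show (2:ℕ) - 1 = 1 from rfl, one_mul]
  have s1 : (∑ l ∈ (pf 3 (p:ℕ)).filter (fun l => (p:ℕ) < l 0 + l 1 + l 2 ∧ l 0 + l 1 + l 2 < 2 * (p:ℕ)), (den p [k1,k2,k3] l)⁻¹)
      = (∑ l ∈ ((pf 3 (p:ℕ)).filter (fun l => (p:ℕ) < l 0 + l 1 + l 2 ∧ l 0 + l 1 + l 2 < 2 * (p:ℕ))).filter (fun l => l 0 + l 1 < (p:ℕ)), (den p [k1,k2,k3] l)⁻¹)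
        + ∑ l ∈ ((pf 3 (p:ℕ)).filter (fun l => (p:ℕ) < l 0 + l 1 + l 2 ∧ l 0 + l 1 + l 2 < 2 * (p:ℕ))).filter (fun l => ¬ l 0 + l 1 < (p:ℕ)), (den p [k1,k2,k3] l)⁻¹ :=
    (Finset.sum_filter_add_sum_filter_not _ _ _).symm
  have s2 : (∑ l ∈ ((pf 3 (p:ℕ)).filter (fun l => (p:ℕ) < l 0 + l 1 + l 2 ∧ l 0 + l 1 + l 2 < 2 * (p:ℕ))).filter (fun l => l 0 + l 1 < (p:ℕ)), (den p [k1,k2,k3] l)⁻¹)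
      = (∑ l ∈ (((pf 3 (p:ℕ)).filter (fun l => (p:ℕ) < l 0 + l 1 + l 2 ∧ l 0 + l 1 + l 2 < 2 * (p:ℕ))).filter (fun l => l 0 + l 1 < (p:ℕ))).filter (fun l => l 0 + l 1 + l 2 < (p:ℕ) + l 0), (den p [k1,k2,k3] l)⁻¹)
        + ∑ l ∈ (((pf 3 (p:ℕ)).filter (fun l => (p:ℕ) < l 0 + l 1 + l 2 ∧ l 0 + l 1 + l 2 < 2 * (p:ℕ))).filter (fun l => l 0 + l 1 < (p:ℕ))).filter (fun l => ¬ l 0 + l 1 + l 2 < (p:ℕ) + l 0), (den p [k1,k2,k3] l)⁻¹ :=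
    (Finset.sum_filter_add_sum_filter_not _ _ _).symm
  have s3 : (∑ l ∈ (((pf 3 (p:ℕ)).filter (fun l => (p:ℕ) < l 0 + l 1 + l 2 ∧ l 0 + l 1 + l 2 < 2 * (p:ℕ))).filter (fun l => l 0 + l 1 < (p:ℕ))).filter (fun l => ¬ l 0 + l 1 + l 2 < (p:ℕ) + l 0), (den p [k1,k2,k3] l)⁻¹)
      = (∑ l ∈ ((((pf 3 (p:ℕ)).filter (fun l => (p:ℕ) < l 0 + l 1 + l 2 ∧ l 0 + l 1 + l 2 < 2 * (p:ℕ))).filter (fun l => l 0 + l 1 < (p:ℕ))).filter (fun l => ¬ l 0 + l 1 + l 2 < (p:ℕ) + l 0)).filter (fun l => l 0 + l 1 + l 2 = (p:ℕ) + l 0), (den p [k1,k2,k3] l)⁻¹)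
        + ∑ l ∈ ((((pf 3 (p:ℕ)).filter (fun l => (p:ℕ) < l 0 + l 1 + l 2 ∧ l 0 + l 1 + l 2 < 2 * (p:ℕ))).filter (fun l => l 0 + l 1 < (p:ℕ))).filter (fun l => ¬ l 0 + l 1 + l 2 < (p:ℕ) + l 0)).filter (fun l => ¬ l 0 + l 1 + l 2 = (p:ℕ) + l 0), (den p [k1,k2,k3] l)⁻¹ :=
    (Finset.sum_filter_add_sum_filter_not _ _ _).symm
  have s4 : (∑ l ∈ ((pf 3 (p:ℕ)).filter (fun l => (p:ℕ) < l 0 + l 1 + l 2 ∧ l 0 + l 1 + l 2 < 2 * (p:ℕ))).filter (fun l => ¬ l 0 + l 1 < (p:ℕ)), (den p [k1,k2,k3] l)⁻¹)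
      = (∑ l ∈ (((pf 3 (p:ℕ)).filter (fun l => (p:ℕ) < l 0 + l 1 + l 2 ∧ l 0 + l 1 + l 2 < 2 * (p:ℕ))).filter (fun l => ¬ l 0 + l 1 < (p:ℕ))).filter (fun l => l 0 + l 1 = (p:ℕ)), (den p [k1,k2,k3] l)⁻¹)
        + ∑ l ∈ (((pf 3 (p:ℕ)).filter (fun l => (p:ℕ) < l 0 + l 1 + l 2 ∧ l 0 + l 1 + l 2 < 2 * (p:ℕ))).filter (fun l => ¬ l 0 + l 1 < (p:ℕ))).filter (fun l => ¬ l 0 + l 1 = (p:ℕ)), (den p [k1,k2,k3] l)⁻¹ :=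
    (Finset.sum_filter_add_sum_filter_not _ _ _).symm
  have s5 : (∑ l ∈ (((pf 3 (p:ℕ)).filter (fun l => (p:ℕ) < l 0 + l 1 + l 2 ∧ l 0 + l 1 + l 2 < 2 * (p:ℕ))).filter (fun l => ¬ l 0 + l 1 < (p:ℕ))).filter (fun l => ¬ l 0 + l 1 = (p:ℕ)), (den p [k1,k2,k3] l)⁻¹)
      = (∑ l ∈ ((((pf 3 (p:ℕ)).filter (fun l => (p:ℕ) < l 0 + l 1 + l 2 ∧ l 0 + l 1 + l 2 < 2 * (p:ℕ))).filter (fun l => ¬ l 0 + l 1 < (p:ℕ))).filter (fun l => ¬ l 0 + l 1 = (p:ℕ))).filter (fun l => l 0 + l 1 + l 2 < (p:ℕ) + l 0), (den p [k1,k2,k3] l)⁻¹)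
        + ∑ l ∈ ((((pf 3 (p:ℕ)).filter (fun l => (p:ℕ) < l 0 + l 1 + l 2 ∧ l 0 + l 1 + l 2 < 2 * (p:ℕ))).filter (fun l => ¬ l 0 + l 1 < (p:ℕ))).filter (fun l => ¬ l 0 + l 1 = (p:ℕ))).filter (fun l => ¬ l 0 + l 1 + l 2 < (p:ℕ) + l 0), (den p [k1,k2,k3] l)⁻¹ :=
    (Finset.sum_filter_add_sum_filter_not _ _ _).symm
  have s6 : (∑ l ∈ ((((pf 3 (p:ℕ)).filter (fun l => (p:ℕ) < l 0 + l 1 + l 2 ∧ l 0 + l 1 + l 2 < 2 * (p:ℕ))).filter (fun l => ¬ l 0 + l 1 < (p:ℕ))).filter (fun l => ¬ l 0 + l 1 = (p:ℕ))).filter (fun l => ¬ l 0 + l 1 + l 2 < (p:ℕ) + l 0), (den p [k1,k2,k3] l)⁻¹)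
      = (∑ l ∈ (((((pf 3 (p:ℕ)).filter (fun l => (p:ℕ) < l 0 + l 1 + l 2 ∧ l 0 + l 1 + l 2 < 2 * (p:ℕ))).filter (fun l => ¬ l 0 + l 1 < (p:ℕ))).filter (fun l => ¬ l 0 + l 1 = (p:ℕ))).filter (fun l => ¬ l 0 + l 1 + l 2 < (p:ℕ) + l 0)).filter (fun l => l 0 + l 1 + l 2 = (p:ℕ) + l 0), (den p [k1,k2,k3] l)⁻¹)
        + ∑ l ∈ (((((pf 3 (p:ℕ)).filter (fun l => (p:ℕ) < l 0 + l 1 + l 2 ∧ l 0 + l 1 + l 2 < 2 * (p:ℕ))).filter (fun l => ¬ l 0 + l 1 < (p:ℕ))).filter (fun l => ¬ l 0 + l 1 = (p:ℕ))).filter (fun l => ¬ l 0 + l 1 + l 2 < (p:ℕ) + l 0)).filter (fun l => ¬ l 0 + l 1 + l 2 = (p:ℕ) + l 0), (den p [k1,k2,k3] l)⁻¹ :=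
    (Finset.sum_filter_add_sum_filter_not _ _ _).symm
  have z0 : (∑ l ∈ (((pf 3 (p:ℕ)).filter (fun l => (p:ℕ) < l 0 + l 1 + l 2 ∧ l 0 + l 1 + l 2 < 2 * (p:ℕ))).filter (fun l => ¬ l 0 + l 1 < (p:ℕ))).filter (fun l => l 0 + l 1 = (p:ℕ)), (den p [k1,k2,k3] l)⁻¹) = 0 := by
    refine Finset.sum_eq_zero fun l hl => ?_
    rw [den3, (Finset.mem_filter.mp hl).2]
    simp [ZMod.natCast_self, zero_pow h2.ne', inv_zero]
  have hA1 :
      (∑ l ∈ (((pf 3 (p:ℕ)).filter (fun l => (p:ℕ) < l 0 + l 1 + l 2 ∧ l 0 + l 1 + l 2 < 2 * (p:ℕ))).filter (fun l => l 0 + l 1 < (p:ℕ))).filter (fun l => l 0 + l 1 + l 2 < (p:ℕ) + l 0), (den p [k1,k2,k3] l)⁻¹)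
        = ∑ m ∈ (pf 3 (p:ℕ)).filter (fun m => m 0 + m 1 + m 2 < (p:ℕ)), (den p [k3,k1,k2] m)⁻¹ := by
    refine Finset.sum_nbij' (fun l => ![l 0 + l 1 + l 2 - (p:ℕ), (p:ℕ) - l 1 - l 2, l 1]) (fun m => ![m 0 + m 1, m 2, (p:ℕ) - m 1 - m 2]) ?_ ?_ ?_ ?_ ?_
    · intro l hl
      simp only [Finset.mem_filter, mem_pf3, mem_pf2] at hl ⊢
      simp only [Matrix.cons_val_zero, Matrix.cons_val_one, Matrix.head_cons,
      Matrix.cons_val_two, Matrix.tail_cons]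
      omega
    · intro m hm
      simp only [Finset.mem_filter, mem_pf3, mem_pf2] at hm ⊢
      simp only [Matrix.cons_val_zero, Matrix.cons_val_one, Matrix.head_cons,
      Matrix.cons_val_two, Matrix.tail_cons]
      omega
    · intro l hl
      simp only [Finset.mem_filter, mem_pf3, mem_pf2] at hl
      funext i
      fin_cases i <;> simp only [Fin.zero_eta, Fin.mk_one, Fin.reduceFinMk, Matrix.cons_val_zero, Matrix.cons_val_one, Matrix.head_cons,
      Matrix.cons_val_two, Matrix.tail_cons] <;> omega
    · intro m hm
      simp only [Finset.mem_filter, mem_pf3, mem_pf2] at hm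
      funext i
      fin_cases i <;> simp only [Fin.zero_eta, Fin.mk_one, Fin.reduceFinMk, Matrix.cons_val_zero, Matrix.cons_val_one, Matrix.head_cons,
      Matrix.cons_val_two, Matrix.tail_cons] <;> omega
    · intro l hl
      simp only [Finset.mem_filter, mem_pf3, mem_pf2] at hl
      rw [den3, den3 p]
      congr 1
      simp only [Matrix.cons_val_zero, Matrix.cons_val_one, Matrix.head_cons,
      Matrix.cons_val_two, Matrix.tail_cons]
      have es : ((l 0 + l 1 + l 2 : ℕ) : ZMod (p:ℕ)) = ((l 0 + l 1 + l 2 - (p:ℕ) : ℕ) : ZMod (p:ℕ)) := by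
        conv_lhs => rw [show l 0 + l 1 + l 2 = (p:ℕ) + (l 0 + l 1 + l 2 - (p:ℕ)) from by omega,
          cast_q_add]
      rw [show l 0 + l 1 + l 2 - (p:ℕ) + ((p:ℕ) - l 1 - l 2) = l 0 by omega, es]
      ring
  have hA2 :
      (∑ l ∈ ((((pf 3 (p:ℕ)).filter (fun l => (p:ℕ) < l 0 + l 1 + l 2 ∧ l 0 + l 1 + l 2 < 2 * (p:ℕ))).filter (fun l => l 0 + l 1 < (p:ℕ))).filter (fun l => ¬ l 0 + l 1 + l 2 < (p:ℕ) + l 0)).filter (fun l => l 0 + l 1 + l 2 = (p:ℕ) + l 0), (den p [k1,k2,k3] l)⁻¹)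
        = ∑ m ∈ (pf 2 (p:ℕ)).filter (fun m => m 0 + m 1 < (p:ℕ)), (den p [k1+k3,k2] m)⁻¹ := by
    refine Finset.sum_nbij' (fun l => ![l 0, l 1]) (fun m => ![m 0, m 1, (p:ℕ) - m 1]) ?_ ?_ ?_ ?_ ?_
    · intro l hl
      simp only [Finset.mem_filter, mem_pf3, mem_pf2] at hl ⊢
      simp only [Matrix.cons_val_zero, Matrix.cons_val_one, Matrix.head_cons,
      Matrix.cons_val_two, Matrix.tail_cons]
      omega
    · intro m hm
      simp only [Finset.mem_filter, mem_pf3, mem_pf2] at hm ⊢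
      simp only [Matrix.cons_val_zero, Matrix.cons_val_one, Matrix.head_cons,
      Matrix.cons_val_two, Matrix.tail_cons]
      omega
    · intro l hl
      simp only [Finset.mem_filter, mem_pf3, mem_pf2] at hl
      funext i
      fin_cases i <;> simp only [Fin.zero_eta, Fin.mk_one, Fin.reduceFinMk, Matrix.cons_val_zero, Matrix.cons_val_one, Matrix.head_cons,
      Matrix.cons_val_two, Matrix.tail_cons] <;> omega
    · intro m hm
      simp only [Finset.mem_filter, mem_pf3, mem_pf2] at hm
      funext i
      fin_cases i <;> simp only [Fin.zero_eta, Fin.mk_one, Fin.reduceFinMk, Matrix.cons_val_zero, Matrix.cons_val_one, Matrix.head_cons,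
      Matrix.cons_val_two, Matrix.tail_cons] <;> omega
    · intro l hl
      simp only [Finset.mem_filter, mem_pf3, mem_pf2] at hl
      rw [den3, den2 p]
      congr 1
      simp only [Matrix.cons_val_zero, Matrix.cons_val_one, Matrix.head_cons,
      Matrix.cons_val_two, Matrix.tail_cons]
      rw [show l 0 + l 1 + l 2 = (p:ℕ) + l 0 by omega, cast_q_add, pow_add]
      ring
  have hA3 :
      (∑ l ∈ ((((pf 3 (p:ℕ)).filter (fun l => (p:ℕ) < l 0 + l 1 + l 2 ∧ l 0 + l 1 + l 2 < 2 * (p:ℕ))).filter (fun l => l 0 + l 1 < (p:ℕ))).filter (fun l => ¬ l 0 + l 1 + l 2 < (p:ℕ) + l 0)).filter (fun l => ¬ l 0 + l 1 + l 2 = (p:ℕ) + l 0), (den p [k1,k2,k3] l)⁻¹)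
        = ∑ m ∈ (pf 3 (p:ℕ)).filter (fun m => m 0 + m 1 + m 2 < (p:ℕ)), (den p [k1,k3,k2] m)⁻¹ := by
    refine Finset.sum_nbij' (fun l => ![l 0, l 0 + l 1 + l 2 - (p:ℕ) - l 0, (p:ℕ) - l 2]) (fun m => ![m 0, m 1 + m 2, (p:ℕ) - m 2]) ?_ ?_ ?_ ?_ ?_
    · intro l hl
      simp only [Finset.mem_filter, mem_pf3, mem_pf2] at hl ⊢
      simp only [Matrix.cons_val_zero, Matrix.cons_val_one, Matrix.head_cons,
      Matrix.cons_val_two, Matrix.tail_cons]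
      omega
    · intro m hm
      simp only [Finset.mem_filter, mem_pf3, mem_pf2] at hm ⊢
      simp only [Matrix.cons_val_zero, Matrix.cons_val_one, Matrix.head_cons,
      Matrix.cons_val_two, Matrix.tail_cons]
      omega
    · intro l hl
      simp only [Finset.mem_filter, mem_pf3, mem_pf2] at hl
      funext i
      fin_cases i <;> simp only [Fin.zero_eta, Fin.mk_one, Fin.reduceFinMk, Matrix.cons_val_zero, Matrix.cons_val_one, Matrix.head_cons,
      Matrix.cons_val_two, Matrix.tail_cons] <;> omega
    · intro m hm
      simp only [Finset.mem_filter, mem_pf3, mem_pf2] at hm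
      funext i
      fin_cases i <;> simp only [Fin.zero_eta, Fin.mk_one, Fin.reduceFinMk, Matrix.cons_val_zero, Matrix.cons_val_one, Matrix.head_cons,
      Matrix.cons_val_two, Matrix.tail_cons] <;> omega
    · intro l hl
      simp only [Finset.mem_filter, mem_pf3, mem_pf2] at hl
      rw [den3, den3 p]
      congr 1
      simp only [Matrix.cons_val_zero, Matrix.cons_val_one, Matrix.head_cons,
      Matrix.cons_val_two, Matrix.tail_cons]
      have es : ((l 0 + l 1 + l 2 : ℕ) : ZMod (p:ℕ)) = ((l 0 + l 1 + l 2 - (p:ℕ) : ℕ) : ZMod (p:ℕ)) := by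
        conv_lhs => rw [show l 0 + l 1 + l 2 = (p:ℕ) + (l 0 + l 1 + l 2 - (p:ℕ)) from by omega,
          cast_q_add]
      rw [show l 0 + (l 0 + l 1 + l 2 - (p:ℕ) - l 0) = l 0 + l 1 + l 2 - (p:ℕ) by omega,
        show l 0 + l 1 + l 2 - (p:ℕ) + ((p:ℕ) - l 2) = l 0 + l 1 by omega, es]
      ring
  have hB1 :
      (∑ l ∈ ((((pf 3 (p:ℕ)).filter (fun l => (p:ℕ) < l 0 + l 1 + l 2 ∧ l 0 + l 1 + l 2 < 2 * (p:ℕ))).filter (fun l => ¬ l 0 + l 1 < (p:ℕ))).filter (fun l => ¬ l 0 + l 1 = (p:ℕ))).filter (fun l => l 0 + l 1 + l 2 < (p:ℕ) + l 0), (den p [k1,k2,k3] l)⁻¹)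
        = ∑ m ∈ (pf 3 (p:ℕ)).filter (fun m => m 0 + m 1 + m 2 < (p:ℕ)), (den p [k2,k3,k1] m)⁻¹ := by
    refine Finset.sum_nbij' (fun l => ![l 0 + l 1 - (p:ℕ), l 2, (p:ℕ) + l 0 - (l 0 + l 1 + l 2)]) (fun m => ![m 0 + m 1 + m 2, (p:ℕ) - m 1 - m 2, m 1]) ?_ ?_ ?_ ?_ ?_
    · intro l hl
      simp only [Finset.mem_filter, mem_pf3, mem_pf2] at hl ⊢
      simp only [Matrix.cons_val_zero, Matrix.cons_val_one, Matrix.head_cons,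
      Matrix.cons_val_two, Matrix.tail_cons]
      omega
    · intro m hm
      simp only [Finset.mem_filter, mem_pf3, mem_pf2] at hm ⊢
      simp only [Matrix.cons_val_zero, Matrix.cons_val_one, Matrix.head_cons,
      Matrix.cons_val_two, Matrix.tail_cons]
      omega
    · intro l hl
      simp only [Finset.mem_filter, mem_pf3, mem_pf2] at hl
      funext i
      fin_cases i <;> simp only [Fin.zero_eta, Fin.mk_one, Fin.reduceFinMk, Matrix.cons_val_zero, Matrix.cons_val_one, Matrix.head_cons,
      Matrix.cons_val_two, Matrix.tail_cons] <;> omega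
    · intro m hm
      simp only [Finset.mem_filter, mem_pf3, mem_pf2] at hm
      funext i
      fin_cases i <;> simp only [Fin.zero_eta, Fin.mk_one, Fin.reduceFinMk, Matrix.cons_val_zero, Matrix.cons_val_one, Matrix.head_cons,
      Matrix.cons_val_two, Matrix.tail_cons] <;> omega
    · intro l hl
      simp only [Finset.mem_filter, mem_pf3, mem_pf2] at hl
      rw [den3, den3 p]
      congr 1
      simp only [Matrix.cons_val_zero, Matrix.cons_val_one, Matrix.head_cons,
      Matrix.cons_val_two, Matrix.tail_cons]
      have es : ((l 0 + l 1 + l 2 : ℕ) : ZMod (p:ℕ)) = ((l 0 + l 1 + l 2 - (p:ℕ) : ℕ) : ZMod (p:ℕ)) := by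
        conv_lhs => rw [show l 0 + l 1 + l 2 = (p:ℕ) + (l 0 + l 1 + l 2 - (p:ℕ)) from by omega,
          cast_q_add]
      have eb : ((l 0 + l 1 : ℕ) : ZMod (p:ℕ)) = ((l 0 + l 1 - (p:ℕ) : ℕ) : ZMod (p:ℕ)) := by
        conv_lhs => rw [show l 0 + l 1 = (p:ℕ) + (l 0 + l 1 - (p:ℕ)) from by omega,
          cast_q_add]
      rw [show l 0 + l 1 - (p:ℕ) + l 2 = l 0 + l 1 + l 2 - (p:ℕ) by omega,
        show l 0 + l 1 + l 2 - (p:ℕ) + ((p:ℕ) + l 0 - (l 0 + l 1 + l 2)) = l 0 by omega, es, eb]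
      ring
  have hB2 :
      (∑ l ∈ (((((pf 3 (p:ℕ)).filter (fun l => (p:ℕ) < l 0 + l 1 + l 2 ∧ l 0 + l 1 + l 2 < 2 * (p:ℕ))).filter (fun l => ¬ l 0 + l 1 < (p:ℕ))).filter (fun l => ¬ l 0 + l 1 = (p:ℕ))).filter (fun l => ¬ l 0 + l 1 + l 2 < (p:ℕ) + l 0)).filter (fun l => l 0 + l 1 + l 2 = (p:ℕ) + l 0), (den p [k1,k2,k3] l)⁻¹)
        = ∑ m ∈ (pf 2 (p:ℕ)).filter (fun m => m 0 + m 1 < (p:ℕ)), (den p [k2,k1+k3] m)⁻¹ := by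
    refine Finset.sum_nbij' (fun l => ![l 0 + l 1 - (p:ℕ), (p:ℕ) - l 1]) (fun m => ![m 0 + m 1, (p:ℕ) - m 1, m 1]) ?_ ?_ ?_ ?_ ?_
    · intro l hl
      simp only [Finset.mem_filter, mem_pf3, mem_pf2] at hl ⊢
      simp only [Matrix.cons_val_zero, Matrix.cons_val_one, Matrix.head_cons,
      Matrix.cons_val_two, Matrix.tail_cons]
      omega
    · intro m hm
      simp only [Finset.mem_filter, mem_pf3, mem_pf2] at hm ⊢
      simp only [Matrix.cons_val_zero, Matrix.cons_val_one, Matrix.head_cons,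
      Matrix.cons_val_two, Matrix.tail_cons]
      omega
    · intro l hl
      simp only [Finset.mem_filter, mem_pf3, mem_pf2] at hl
      funext i
      fin_cases i <;> simp only [Fin.zero_eta, Fin.mk_one, Fin.reduceFinMk, Matrix.cons_val_zero, Matrix.cons_val_one, Matrix.head_cons,
      Matrix.cons_val_two, Matrix.tail_cons] <;> omega
    · intro m hm
      simp only [Finset.mem_filter, mem_pf3, mem_pf2] at hm
      funext i
      fin_cases i <;> simp only [Fin.zero_eta, Fin.mk_one, Fin.reduceFinMk, Matrix.cons_val_zero, Matrix.cons_val_one, Matrix.head_cons,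
      Matrix.cons_val_two, Matrix.tail_cons] <;> omega
    · intro l hl
      simp only [Finset.mem_filter, mem_pf3, mem_pf2] at hl
      rw [den3, den2 p]
      congr 1
      simp only [Matrix.cons_val_zero, Matrix.cons_val_one, Matrix.head_cons,
      Matrix.cons_val_two, Matrix.tail_cons]
      have eb : ((l 0 + l 1 : ℕ) : ZMod (p:ℕ)) = ((l 0 + l 1 - (p:ℕ) : ℕ) : ZMod (p:ℕ)) := by
        conv_lhs => rw [show l 0 + l 1 = (p:ℕ) + (l 0 + l 1 - (p:ℕ)) from by omega,
          cast_q_add]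
      rw [show l 0 + l 1 - (p:ℕ) + ((p:ℕ) - l 1) = l 0 by omega,
        show l 0 + l 1 + l 2 = (p:ℕ) + l 0 by omega, cast_q_add, eb, pow_add]
      ring
  have hB3 :
      (∑ l ∈ (((((pf 3 (p:ℕ)).filter (fun l => (p:ℕ) < l 0 + l 1 + l 2 ∧ l 0 + l 1 + l 2 < 2 * (p:ℕ))).filter (fun l => ¬ l 0 + l 1 < (p:ℕ))).filter (fun l => ¬ l 0 + l 1 = (p:ℕ))).filter (fun l => ¬ l 0 + l 1 + l 2 < (p:ℕ) + l 0)).filter (fun l => ¬ l 0 + l 1 + l 2 = (p:ℕ) + l 0), (den p [k1,k2,k3] l)⁻¹)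
        = ∑ m ∈ (pf 3 (p:ℕ)).filter (fun m => m 0 + m 1 + m 2 < (p:ℕ)), (den p [k2,k1,k3] m)⁻¹ := by
    refine Finset.sum_nbij' (fun l => ![l 0 + l 1 - (p:ℕ), (p:ℕ) - l 1, l 0 + l 1 + l 2 - (p:ℕ) - l 0]) (fun m => ![m 0 + m 1, (p:ℕ) - m 1, m 1 + m 2]) ?_ ?_ ?_ ?_ ?_
    · intro l hl
      simp only [Finset.mem_filter, mem_pf3, mem_pf2] at hl ⊢
      simp only [Matrix.cons_val_zero, Matrix.cons_val_one, Matrix.head_cons,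
      Matrix.cons_val_two, Matrix.tail_cons]
      omega
    · intro m hm
      simp only [Finset.mem_filter, mem_pf3, mem_pf2] at hm ⊢
      simp only [Matrix.cons_val_zero, Matrix.cons_val_one, Matrix.head_cons,
      Matrix.cons_val_two, Matrix.tail_cons]
      omega
    · intro l hl
      simp only [Finset.mem_filter, mem_pf3, mem_pf2] at hl
      funext i
      fin_cases i <;> simp only [Fin.zero_eta, Fin.mk_one, Fin.reduceFinMk, Matrix.cons_val_zero, Matrix.cons_val_one, Matrix.head_cons,
      Matrix.cons_val_two, Matrix.tail_cons] <;> omega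
    · intro m hm
      simp only [Finset.mem_filter, mem_pf3, mem_pf2] at hm
      funext i
      fin_cases i <;> simp only [Fin.zero_eta, Fin.mk_one, Fin.reduceFinMk, Matrix.cons_val_zero, Matrix.cons_val_one, Matrix.head_cons,
      Matrix.cons_val_two, Matrix.tail_cons] <;> omega
    · intro l hl
      simp only [Finset.mem_filter, mem_pf3, mem_pf2] at hl
      rw [den3, den3 p]
      congr 1
      simp only [Matrix.cons_val_zero, Matrix.cons_val_one, Matrix.head_cons,
      Matrix.cons_val_two, Matrix.tail_cons]
      have es : ((l 0 + l 1 + l 2 : ℕ) : ZMod (p:ℕ)) = ((l 0 + l 1 + l 2 - (p:ℕ) : ℕ) : ZMod (p:ℕ)) := by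
        conv_lhs => rw [show l 0 + l 1 + l 2 = (p:ℕ) + (l 0 + l 1 + l 2 - (p:ℕ)) from by omega,
          cast_q_add]
      have eb : ((l 0 + l 1 : ℕ) : ZMod (p:ℕ)) = ((l 0 + l 1 - (p:ℕ) : ℕ) : ZMod (p:ℕ)) := by
        conv_lhs => rw [show l 0 + l 1 = (p:ℕ) + (l 0 + l 1 - (p:ℕ)) from by omega,
          cast_q_add]
      rw [show l 0 + l 1 - (p:ℕ) + ((p:ℕ) - l 1) = l 0 by omega,
        show l 0 + (l 0 + l 1 + l 2 - (p:ℕ) - l 0) = l 0 + l 1 + l 2 - (p:ℕ) by omega, es, eb]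
      ring
  rw [s1, s2, s3, s4, s5, s6, z0, hA1, hA2, hA3, hB1, hB2, hB3]
  ring


/-- ζ^{(2)}_𝒜(k₁,k₂,k₃) expressed as a sum of FMZVs. -/
theorem zetaAi_two_depth_three (k1 k2 k3 : ℕ) (h1 : 0 < k1) (h2 : 0 < k2) (h3 : 0 < k3) :
    zetaAi 2 [k1, k2, k3]
      = zetaA [k3, k1, k2] + zetaA [k1, k3, k2] + zetaA [k2, k3, k1] + zetaA [k2, k1, k3]
        + zetaA [k1 + k3, k2] + zetaA [k2, k1 + k3] := by
  unfold zetaAi zetaA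
  rw [← map_add, ← map_add, ← map_add, ← map_add, ← map_add]
  refine congrArg Amk (funext fun p => ?_)
  simp only [Pi.add_apply]
  exact key_lemma k1 k2 k3 h2 p

end FMP
end
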